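/- Let H be a Hopf algebra, A a left H-module algebra and H-module coalgebra satisfying the Yetter–Drinfeld condition with Haar integral Λ. Then Λ ⊗ 1_H is central in the crossed product algebra A ⋊ H: (Λ⊗1)·(a⊗h) = Λa ⊗ h = (a⊗h)·(Λ⊗1) for all a ∈ A, h ∈ H. -/

import Mathlib

open TensorProduct Coalgebra

noncomputable section

/-- Given an action `act : H →ₗ (A →ₗ A)`, the induced "diagonal" operator
`act2 act h = ∑ (h₍₁₎ ▷ ·) ⊗ (h₍₂₎ ▷ ·)` on `A ⊗ A`. -/
def act2 {H A : Type*} [Ring H] [Ring A] [HopfAlgebra ℂ H] [HopfAlgebra ℂ A]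
    (act : H →ₗ[ℂ] A →ₗ[ℂ] A) : H →ₗ[ℂ] (A ⊗[ℂ] A →ₗ[ℂ] A ⊗[ℂ] A) :=
  (TensorProduct.homTensorHomMap (RingHom.id ℂ) A A A A) ∘ₗ (TensorProduct.map act act) ∘ₗ
    (comul : H →ₗ[ℂ] H ⊗[ℂ] H)

/-- The multiplication `(a ⊗ h) ⬝ (b ⊗ k) = a (h₍₁₎ ▷ b) ⊗ h₍₂₎ k` of the crossed
(smash) product `A ⋊ H`. -/
def crossedMul (H A : Type*) [Ring H] [Ring A] [HopfAlgebra ℂ H] [HopfAlgebra ℂ A]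
    (act : H →ₗ[ℂ] A →ₗ[ℂ] A) :
    (A ⊗[ℂ] H) ⊗[ℂ] (A ⊗[ℂ] H) →ₗ[ℂ] A ⊗[ℂ] H :=
  (TensorProduct.map (LinearMap.mul' ℂ A) LinearMap.id) ∘ₗ
  (TensorProduct.assoc ℂ A A H).symm.toLinearMap ∘ₗ
  (TensorProduct.map LinearMap.id
    ((TensorProduct.map (TensorProduct.lift act) (LinearMap.mul' ℂ H)) ∘ₗ
      (TensorProduct.tensorTensorTensorComm ℂ H H A H).toLinearMap)) ∘ₗ
  (TensorProduct.assoc ℂ A (H ⊗[ℂ] H) (A ⊗[ℂ] H)).toLinearMap ∘ₗ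
  (TensorProduct.map (TensorProduct.map LinearMap.id (comul : H →ₗ[ℂ] H ⊗[ℂ] H))
    LinearMap.id)

section Aux

variable {H A : Type*} [Ring H] [Ring A] [HopfAlgebra ℂ H] [HopfAlgebra ℂ A]

lemma sum_counit_smul_right {ι : Type*} (h : H) (r : Coalgebra.Repr ℂ h ι) :
    ∑ i ∈ r.index, counit (R := ℂ) (r.left i) • r.right i = h := by
  simpa [map_sum, -Coalgebra.sum_counit_tmul_eq]
    using congrArg (TensorProduct.lid ℂ H) (Coalgebra.sum_counit_tmul_eq r)

lemma sum_counit_smul_left {ι : Type*} (h : H) (r : Coalgebra.Repr ℂ h ι) :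
    ∑ i ∈ r.index, counit (R := ℂ) (r.right i) • r.left i = h := by
  simpa [map_sum, -Coalgebra.sum_tmul_counit_eq]
    using congrArg (TensorProduct.rid ℂ H) (Coalgebra.sum_tmul_counit_eq r)

lemma counit_antipode' (k : H) :
    counit (R := ℂ) (HopfAlgebra.antipode (R := ℂ) k) = counit (R := ℂ) k := by
  set r := ℛ ℂ k with hr
  have h1 := HopfAlgebra.sum_antipode_mul_eq_smul (R := ℂ) r
  have h2 := congrArg (counit (R := ℂ)) h1
  rw [map_sum] at h2
  simp only [Bialgebra.counit_mul, map_smul, Bialgebra.counit_one, smul_eq_mul, mul_one] at h2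
  have h3 : HopfAlgebra.antipode (R := ℂ) k
      = ∑ i ∈ r.index, counit (R := ℂ) (r.right i) • HopfAlgebra.antipode (R := ℂ) (r.left i) := by
    conv_lhs => rw [← sum_counit_smul_left k r]
    simp [map_sum]
  rw [h3, map_sum]
  simp only [map_smul, smul_eq_mul]
  rw [← h2]
  exact Finset.sum_congr rfl fun i _ => mul_comm _ _

/-- `Tmap act b Λ (α ⊗ (β ⊗ γ)) = act α (act (S β) b) * act γ Λ`. -/
def Tmap (act : H →ₗ[ℂ] A →ₗ[ℂ] A) (b Λ : A) : H ⊗[ℂ] (H ⊗[ℂ] H) →ₗ[ℂ] A :=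
  (LinearMap.mul' ℂ A) ∘ₗ
  (TensorProduct.map
    (TensorProduct.lift (act.compl₂ ((act.flip b) ∘ₗ HopfAlgebra.antipode (R := ℂ))))
    (act.flip Λ)) ∘ₗ
  (TensorProduct.assoc ℂ H H H).symm.toLinearMap

@[simp] lemma Tmap_tmul (act : H →ₗ[ℂ] A →ₗ[ℂ] A) (b Λ : A) (α β γ : H) :
    Tmap act b Λ (α ⊗ₜ[ℂ] (β ⊗ₜ[ℂ] γ))
      = act α (act (HopfAlgebra.antipode (R := ℂ) β) b) * act γ Λ := by
  simp [Tmap]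

/-- `Gmap act b x (t ⊗ c) = act x (act (S t) b) * c`. -/
def Gmap (act : H →ₗ[ℂ] A →ₗ[ℂ] A) (b : A) (x : H) : H ⊗[ℂ] A →ₗ[ℂ] A :=
  (LinearMap.mul' ℂ A) ∘ₗ
  (TensorProduct.map ((act x) ∘ₗ (act.flip b) ∘ₗ HopfAlgebra.antipode (R := ℂ)) LinearMap.id)

@[simp] lemma Gmap_tmul (act : H →ₗ[ℂ] A →ₗ[ℂ] A) (b : A) (x t : H) (c : A) :
    Gmap act b x (t ⊗ₜ[ℂ] c) = act x (act (HopfAlgebra.antipode (R := ℂ) t) b) * c := by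
  simp [Gmap]

lemma act_mul_sum (act : H →ₗ[ℂ] A →ₗ[ℂ] A)
    (modalg_mul : ∀ (h : H) (a b : A),
      act h (a * b) = LinearMap.mul' ℂ A (act2 act h (a ⊗ₜ[ℂ] b)))
    {ι : Type*} (x : H) (rx : Coalgebra.Repr ℂ x ι) (z w : A) :
    act x (z * w) = ∑ j ∈ rx.index, act (rx.left j) z * act (rx.right j) w := by
  rw [modalg_mul]
  unfold act2
  simp only [LinearMap.comp_apply]
  rw [← rx.eq]
  simp [map_sum, LinearMap.sum_apply]

/-- Key computation: for any `b`, `b · (h ▷ Λ) = ε(b) (h ▷ Λ)`, i.e. `h ▷ Λ` is again a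
left integral.  Uses the antipode, the module-algebra axioms and the Yetter–Drinfeld
condition. -/
lemma integral_absorb (act : H →ₗ[ℂ] A →ₗ[ℂ] A)
    (act_mul : ∀ (h k : H) (a : A), act (h * k) a = act h (act k a))
    (act_one : ∀ a : A, act 1 a = a)
    (modalg_mul : ∀ (h : H) (a b : A),
      act h (a * b) = LinearMap.mul' ℂ A (act2 act h (a ⊗ₜ[ℂ] b)))
    (modcoalg_counit : ∀ (h : H) (a : A),
      counit (R := ℂ) (act h a) = counit (R := ℂ) h * counit (R := ℂ) a)
    (yd : ∀ (h : H) (a : A),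
      TensorProduct.map LinearMap.id (act.flip a) (comul (R := ℂ) h) =
        TensorProduct.map LinearMap.id (act.flip a)
          ((TensorProduct.comm ℂ H H) (comul (R := ℂ) h)))
    (Λ : A) (hleft : ∀ a : A, a * Λ = counit (R := ℂ) a • Λ)
    (b : A) (h : H) :
    b * act h Λ = counit (R := ℂ) b • act h Λ := by
  classical
  set S : H →ₗ[ℂ] H := HopfAlgebra.antipode (R := ℂ) with hS
  set r := ℛ ℂ h with hrdef
  set r1 : (i : r.ι) → Coalgebra.Repr ℂ (r.left i) (H × H) := fun i => ℛ ℂ (r.left i) with hr1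
  set r2 : (i : r.ι) → Coalgebra.Repr ℂ (r.right i) (H × H) := fun i => ℛ ℂ (r.right i) with hr2
  have step_antipode : ∀ i, (counit (R := ℂ) (r.left i)) • b
      = ∑ j ∈ (r1 i).index, act ((r1 i).left j) (act (S ((r1 i).right j)) b) := by
    intro i
    calc counit (R := ℂ) (r.left i) • b
        = act (counit (R := ℂ) (r.left i) • (1 : H)) b := by
          rw [map_smul, LinearMap.smul_apply, act_one]
      _ = act (∑ j ∈ (r1 i).index, (r1 i).left j * S ((r1 i).right j)) b := by
          rw [HopfAlgebra.sum_mul_antipode_eq_smul]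
      _ = ∑ j ∈ (r1 i).index, act ((r1 i).left j) (act (S ((r1 i).right j)) b) := by
          rw [map_sum, LinearMap.sum_apply]
          exact Finset.sum_congr rfl fun j _ => act_mul _ _ _
  calc b * act h Λ
      = b * act (∑ i ∈ r.index, counit (R := ℂ) (r.left i) • r.right i) Λ := by
        rw [sum_counit_smul_right h r]
    _ = ∑ i ∈ r.index, (counit (R := ℂ) (r.left i) • b) * act (r.right i) Λ := by
        rw [map_sum, LinearMap.sum_apply, Finset.mul_sum]
        exact Finset.sum_congr rfl fun i _ => by
          rw [map_smul, LinearMap.smul_apply, mul_smul_comm, smul_mul_assoc]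
    _ = ∑ i ∈ r.index, ∑ j ∈ (r1 i).index,
          Tmap act b Λ (((r1 i).left j) ⊗ₜ[ℂ] (((r1 i).right j) ⊗ₜ[ℂ] (r.right i))) := by
        refine Finset.sum_congr rfl fun i _ => ?_
        rw [step_antipode i, Finset.sum_mul]
        exact Finset.sum_congr rfl fun j _ => (Tmap_tmul act b Λ _ _ _).symm
    _ = ∑ i ∈ r.index, ∑ j ∈ (r2 i).index,
          Tmap act b Λ ((r.left i) ⊗ₜ[ℂ] (((r2 i).left j) ⊗ₜ[ℂ] ((r2 i).right j))) := by
        have hco := Coalgebra.sum_tmul_tmul_eq r r1 r2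
        have := congrArg (Tmap act b Λ) hco
        simpa [map_sum, -Coalgebra.sum_tmul_tmul_eq] using this
    _ = ∑ i ∈ r.index, ∑ j ∈ (r2 i).index,
          Tmap act b Λ ((r.left i) ⊗ₜ[ℂ] (((r2 i).right j) ⊗ₜ[ℂ] ((r2 i).left j))) := by
        refine Finset.sum_congr rfl fun i _ => ?_
        have e1 : ∑ j ∈ (r2 i).index,
            Tmap act b Λ ((r.left i) ⊗ₜ[ℂ] (((r2 i).left j) ⊗ₜ[ℂ] ((r2 i).right j)))
            = Gmap act b (r.left i)
              (TensorProduct.map LinearMap.id (act.flip Λ) (comul (R := ℂ) (r.right i))) := by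
          rw [← (r2 i).eq]
          simp [map_sum]
        have e2 : ∑ j ∈ (r2 i).index,
            Tmap act b Λ ((r.left i) ⊗ₜ[ℂ] (((r2 i).right j) ⊗ₜ[ℂ] ((r2 i).left j)))
            = Gmap act b (r.left i)
              (TensorProduct.map LinearMap.id (act.flip Λ)
                ((TensorProduct.comm ℂ H H) (comul (R := ℂ) (r.right i)))) := by
          rw [← (r2 i).eq]
          simp [map_sum]
        rw [e1, e2, yd]
    _ = ∑ i ∈ r.index, ∑ j ∈ (r1 i).index,
          Tmap act b Λ (((r1 i).left j) ⊗ₜ[ℂ] ((r.right i) ⊗ₜ[ℂ] ((r1 i).right j))) := by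
        have := congrArg
          ((Tmap act b Λ) ∘ₗ LinearMap.lTensor H (TensorProduct.comm ℂ H H).toLinearMap)
          (Coalgebra.sum_tmul_tmul_eq r r1 r2)
        simp only [map_sum, LinearMap.comp_apply, LinearMap.lTensor_tmul,
          LinearEquiv.coe_coe, TensorProduct.comm_tmul] at this
        exact this.symm
    _ = ∑ i ∈ r.index, act (r.left i) ((act (S (r.right i)) b) * Λ) := by
        refine Finset.sum_congr rfl fun i _ => ?_
        rw [act_mul_sum act modalg_mul (r.left i) (r1 i)]
        exact Finset.sum_congr rfl fun j _ => by simp [hS]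
    _ = ∑ i ∈ r.index, (counit (R := ℂ) (S (r.right i)) * counit (R := ℂ) b) • act (r.left i) Λ := by
        refine Finset.sum_congr rfl fun i _ => ?_
        rw [hleft, modcoalg_counit, map_smul]
    _ = counit (R := ℂ) b • ∑ i ∈ r.index, counit (R := ℂ) (r.right i) • act (r.left i) Λ := by
        rw [Finset.smul_sum]
        refine Finset.sum_congr rfl fun i _ => ?_
        rw [hS, counit_antipode', smul_smul, mul_comm]
    _ = counit (R := ℂ) b • act h Λ := by
        congr 1
        have := congrArg (act.flip Λ) (sum_counit_smul_left h r)
        simpa [map_sum] using this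

lemma crossedMul_tmul (act : H →ₗ[ℂ] A →ₗ[ℂ] A) (a : A) {ι : Type*} (h : H) (r : Coalgebra.Repr ℂ h ι)
    (c : A) (k : H) :
    crossedMul H A act ((a ⊗ₜ[ℂ] h) ⊗ₜ[ℂ] (c ⊗ₜ[ℂ] k))
      = ∑ i ∈ r.index, (a * act (r.left i) c) ⊗ₜ[ℂ] (r.right i * k) := by
  unfold crossedMul
  simp only [LinearMap.comp_apply, TensorProduct.map_tmul, LinearMap.id_apply]
  rw [← r.eq]
  simp [TensorProduct.sum_tmul, TensorProduct.tmul_sum, map_sum]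

/-- The explicit representation `Δ(1) = 1 ⊗ 1`. -/
def oneRepr : Coalgebra.Repr ℂ (1 : H) ℕ where
  index := ({0} : Finset ℕ)
  left := fun _ => 1
  right := fun _ => 1
  eq := by simp [Algebra.TensorProduct.one_def]

end Aux

/-- If `A` is a left `H`-module algebra and `H`-module coalgebra
satisfying the Yetter–Drinfeld condition, with Haar integral `Λ`, then `Λ ⊗ 1` is central
in the crossed product `A ⋊ H`:
`(Λ ⊗ 1) ⬝ (a ⊗ h) = Λ a ⊗ h = (a ⊗ h) ⬝ (Λ ⊗ 1)`. -/
theorem stmt6 {H A : Type*} [Ring H] [Ring A] [HopfAlgebra ℂ H] [HopfAlgebra ℂ A]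
    (act : H →ₗ[ℂ] A →ₗ[ℂ] A)
    (act_mul : ∀ (h k : H) (a : A), act (h * k) a = act h (act k a))
    (act_one : ∀ a : A, act 1 a = a)
    (modalg_mul : ∀ (h : H) (a b : A),
      act h (a * b) = LinearMap.mul' ℂ A (act2 act h (a ⊗ₜ[ℂ] b)))
    (modalg_one : ∀ h : H, act h 1 = counit (R := ℂ) h • (1 : A))
    (modcoalg_comul : ∀ (h : H) (a : A),
      comul (R := ℂ) (act h a) = act2 act h (comul (R := ℂ) a))
    (modcoalg_counit : ∀ (h : H) (a : A),
      counit (R := ℂ) (act h a) = counit (R := ℂ) h * counit (R := ℂ) a)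
    -- the Yetter–Drinfeld condition `h₍₁₎ ⊗ h₍₂₎ ▷ a = h₍₂₎ ⊗ h₍₁₎ ▷ a`:
    (yd : ∀ (h : H) (a : A),
      TensorProduct.map LinearMap.id (act.flip a) (comul (R := ℂ) h) =
        TensorProduct.map LinearMap.id (act.flip a)
          ((TensorProduct.comm ℂ H H) (comul (R := ℂ) h)))
    -- the Haar integral of `A`:
    (Λ : A) (hidem : Λ * Λ = Λ)
    (hleft : ∀ a : A, a * Λ = counit (R := ℂ) a • Λ)
    (hright : ∀ a : A, Λ * a = counit (R := ℂ) a • Λ) :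
    ∀ (a : A) (h : H),
      crossedMul H A act ((Λ ⊗ₜ[ℂ] (1 : H)) ⊗ₜ[ℂ] (a ⊗ₜ[ℂ] h)) = (Λ * a) ⊗ₜ[ℂ] h ∧
      crossedMul H A act ((a ⊗ₜ[ℂ] h) ⊗ₜ[ℂ] (Λ ⊗ₜ[ℂ] (1 : H))) = (Λ * a) ⊗ₜ[ℂ] h := by
  -- the key invariance: `h ▷ Λ = ε(h) Λ`
  have key : ∀ h : H, act h Λ = counit (R := ℂ) h • Λ := by
    have hΛeq : Λ = counit (R := ℂ) Λ • Λ := by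
      conv_lhs => rw [← hidem]
      exact hright Λ
    have hsq : counit (R := ℂ) Λ = counit (R := ℂ) Λ * counit (R := ℂ) Λ := by
      have := congrArg (counit (R := ℂ)) hΛeq
      rwa [map_smul, smul_eq_mul] at this
    have hcases : counit (R := ℂ) Λ = 0 ∨ counit (R := ℂ) Λ = 1 := by
      rcases mul_eq_zero.mp
        (show (counit (R := ℂ) Λ) * (counit (R := ℂ) Λ - 1) = 0 by linear_combination -hsq)
        with h0 | h1
      · exact Or.inl h0
      · exact Or.inr (sub_eq_zero.mp h1)
    rcases hcases with h0 | h1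
    · have hΛ0 : Λ = 0 := by rw [hΛeq, h0, zero_smul]
      intro h
      simp [hΛ0]
    · intro h
      have l := integral_absorb act act_mul act_one modalg_mul modcoalg_counit yd Λ hleft Λ h
      have rr := hright (act h Λ)
      rw [modcoalg_counit] at rr
      calc act h Λ = Λ * act h Λ := by rw [l, h1, one_smul]
        _ = (counit (R := ℂ) h * counit (R := ℂ) Λ) • Λ := rr
        _ = counit (R := ℂ) h • Λ := by rw [h1, mul_one]
  intro a h
  constructor
  · rw [crossedMul_tmul act Λ 1 oneRepr a h]
    simp [oneRepr, act_one]
  · rw [crossedMul_tmul act a h (ℛ ℂ h) Λ 1]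
    have : ∑ i ∈ (ℛ ℂ h).index,
        (a * act ((ℛ ℂ h).left i) Λ) ⊗ₜ[ℂ] ((ℛ ℂ h).right i * 1)
        = (a * Λ) ⊗ₜ[ℂ] h := by
      calc ∑ i ∈ (ℛ ℂ h).index,
          (a * act ((ℛ ℂ h).left i) Λ) ⊗ₜ[ℂ] ((ℛ ℂ h).right i * 1)
          = ∑ i ∈ (ℛ ℂ h).index,
            (a * Λ) ⊗ₜ[ℂ] (counit (R := ℂ) ((ℛ ℂ h).left i) • (ℛ ℂ h).right i) := by
            refine Finset.sum_congr rfl fun i _ => ?_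
            rw [key, mul_one, mul_smul_comm, TensorProduct.smul_tmul]
        _ = (a * Λ) ⊗ₜ[ℂ] h := by
            rw [← TensorProduct.tmul_sum, sum_counit_smul_right h (ℛ ℂ h)]
    rw [this, hleft, hright]

end
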